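/- Let 𝒜 be a trim ℕ-automaton without heavy cycles, and for i ≥ 0 let S_i be the set of states of height i in its barbell graph 𝔊. Then there exists B ≥ 0 such that for every i, every pair of states q,q' ∈ S_i and every word w ∈ A*, μ(w)(q,q') ≤ B. -/

import Mathlib

set_option autoImplicit false

/-! ### Asymptotic growth of functions `A* → ℕ` -/

/-- `g` has `k`-polynomial growth: `g(w) = O(|w|^k)` and there is an infinite set `L`
of words on which `g(w) = Ω(|w|^k)`. -/
def PolyGrowth {A : Type} (g : List A → ℕ) (k : ℕ) : Prop :=
  (∃ C : ℕ, ∀ w, g w ≤ C * w.length ^ k + C) ∧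
  (∃ L : Set (List A), L.Infinite ∧ ∃ c : ℕ, 0 < c ∧ ∀ w ∈ L, w.length ^ k ≤ c * g w)

/-- `g` has exponential growth: `g(w) = 2^{O(|w|)}` and there is an infinite set `L`
of words on which `g(w) = 2^{Ω(|w|)}`. -/
def ExpGrowth {A : Type} (g : List A → ℕ) : Prop :=
  (∃ C : ℕ, ∀ w, g w ≤ 2 ^ (C * w.length + C)) ∧
  (∃ L : Set (List A), L.Infinite ∧ ∃ c : ℕ, 0 < c ∧ ∀ w ∈ L, 2 ^ w.length ≤ (g w) ^ c)

/-! ### Substitutions -/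

/-- Extension of a substitution `s : X → (B ⊎ X)*` to a morphism on `(B ⊎ X)*`
fixing the letters of `B`; this also gives the composition of substitutions,
`(s₁ ∘ s₂) x = applySubst s₁ (s₂ x)`. -/
def applySubst {B X : Type} (s : X → List (B ⊕ X)) (l : List (B ⊕ X)) : List (B ⊕ X) :=
  l.flatMap (fun c => match c with | Sum.inl b => [Sum.inl b] | Sum.inr x => s x)

/-- Evaluation of a word over `B ⊎ X` under a valuation `v : X → B*` of the registers. -/
def evalSubst {B X : Type} (v : X → List B) (l : List (B ⊕ X)) : List B :=
  l.flatMap (fun c => match c with | Sum.inl b => [b] | Sum.inr x => v x)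

/-- Number of occurrences of register `x` in a word over `B ⊎ X`. -/
noncomputable def occCount {B X : Type} (x : X) (l : List (B ⊕ X)) : ℕ :=
  l.countP (fun c => @decide (c = Sum.inr x) (Classical.propDecidable _))

/-- Total number of occurrences of register `x` in the whole set of words `{s y | y ∈ X}`. -/
noncomputable def totalOcc {B X : Type} [Fintype X] (s : X → List (B ⊕ X)) (x : X) : ℕ :=
  ∑ y : X, occCount x (s y)

/-! ### Streaming string transducers -/

/-- A streaming string transducer (SST) with input alphabet `A` and output alphabet `B`:
finitely many states `Q` with initial state `q0`, finitely many registers `X` with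
initial contents `init`, a partial transition/update function (`trans`, returning the
successor state together with the register update substitution, with a common domain),
and a partial output function `out`. -/
structure SST (A B : Type) where
  Q : Type
  X : Type
  [finQ : Fintype Q]
  [finX : Fintype X]
  q0 : Q
  init : X → List B
  trans : Q → A → Option (Q × (X → List (B ⊕ X)))
  out : Q → Option (List (B ⊕ X))

attribute [instance] SST.finQ SST.finX

/-- Run of an SST from state `q` with current register valuation `v`. -/
def SST.runFrom {A B : Type} (T : SST A B) :
    T.Q → (T.X → List B) → List A → Option (T.Q × (T.X → List B))
  | q, v, [] => some (q, v)
  | q, v, a :: w =>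
    match T.trans q a with
    | none => none
    | some (q', s) => T.runFrom q' (fun x => evalSubst v (s x)) w

/-- The (partial) function computed by an SST. -/
def SST.eval {A B : Type} (T : SST A B) (w : List A) : Option (List B) :=
  (T.runFrom T.q0 T.init w).bind fun p => (T.out p.1).map fun o => evalSubst p.2 o

def SST.Computes {A B : Type} (T : SST A B) (f : List A → Option (List B)) : Prop :=
  ∀ w, T.eval w = f w

/-- An SST is copyless if every update substitution uses each register at most once
in total. -/
def SST.Copyless {A B : Type} (T : SST A B) : Prop :=
  ∀ q a p, T.trans q a = some p → ∀ x : T.X, totalOcc p.2 x ≤ 1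

/-- An SST is `k`-layered if its registers can be partitioned into layers
`X_0, …, X_k` such that every update of a register of layer `i` only uses registers
of layers `≤ i`, and each register of layer `i` is used at most once in total in the
updates of the registers of layer `i`. -/
def SST.IsLayered {A B : Type} (T : SST A B) (k : ℕ) : Prop :=
  ∃ layer : T.X → Fin (k + 1),
    ∀ q a p, T.trans q a = some p →
      (∀ x y, Sum.inr y ∈ p.2 x → layer y ≤ layer x) ∧
      (∀ y : T.X,
        (∑ x ∈ Finset.univ.filter (fun x => layer x = layer y), occCount y (p.2 x)) ≤ 1)

/-- The composed substitution `λ(q, w)` applied along the run reading `w` from state `q`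
(together with the state reached). -/
def SST.substFrom {A B : Type} (T : SST A B) :
    T.Q → List A → Option (T.Q × (T.X → List (B ⊕ T.X)))
  | q, [] => some (q, fun x => [Sum.inr x])
  | q, a :: w =>
    match T.trans q a with
    | none => none
    | some (q', s) => (T.substFrom q' w).map fun p => (p.1, fun x => applySubst s (p.2 x))

/-- An SST is `(k,B)`-bounded if its registers can be partitioned into layers
`X_0, …, X_k` such that every update of a register of layer `i` only uses registers of
layers `≤ i`, and for every state `q` and word `w`, each register of layer `i` occurs
at most `B` times in total in `{λ(q,w)(x) | x ∈ X_i}`. -/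
def SST.IsBounded {A B : Type} (T : SST A B) (k Bd : ℕ) : Prop :=
  ∃ layer : T.X → Fin (k + 1),
    (∀ q a p, T.trans q a = some p → ∀ x y, Sum.inr y ∈ p.2 x → layer y ≤ layer x) ∧
    (∀ q w p, T.substFrom q w = some p →
      ∀ y : T.X,
        (∑ x ∈ Finset.univ.filter (fun x => layer x = layer y), occCount y (p.2 x)) ≤ Bd)

/-! ### Simple SSTs -/

/-- A simple SST: total, a single state (hence no state component), and update
substitutions and output using no letters of `B`. -/
structure SimpleSST (A B : Type) where
  X : Type
  [finX : Fintype X]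
  [decX : DecidableEq X]
  init : X → List B
  upd : A → X → List X
  out : List X

attribute [instance] SimpleSST.finX SimpleSST.decX

/-- Register valuation of a simple SST after reading a word, starting from valuation `v`. -/
def SimpleSST.valFrom {A B : Type} (T : SimpleSST A B) :
    (T.X → List B) → List A → T.X → List B
  | v, [] => v
  | v, a :: w => T.valFrom (fun x => (T.upd a x).flatMap v) w

/-- Register valuation `𝒯^w` of a simple SST after reading `w`. -/
def SimpleSST.val {A B : Type} (T : SimpleSST A B) (w : List A) : T.X → List B :=
  T.valFrom T.init w

/-- The (total) function computed by a simple SST. -/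
def SimpleSST.eval {A B : Type} (T : SimpleSST A B) (w : List A) : List B :=
  (T.out).flatMap (T.val w)

/-! ### Two-way transducers -/

/-- A tape symbol: a letter of `A` or one of the two endmarkers `⊢`, `⊣`. -/
inductive TapeSym (A : Type) where
  | lend
  | rend
  | letter (a : A)

/-- The content of the tape `⊢w⊣` at position `m ∈ {0, …, |w|+1}`. -/
def tapeAt {A : Type} (w : List A) (m : ℕ) : TapeSym A :=
  if m = 0 then TapeSym.lend
  else
    match w[m - 1]? with
    | some a => TapeSym.letter a
    | none => TapeSym.rend

/-- Head moves. -/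
inductive Dir where
  | left
  | right

/-- A deterministic two-way transducer: finitely many states with an initial state and
a set of final states, and a partial transition/output function (common domain). -/
structure TwoWayT (A B : Type) where
  Q : Type
  [finQ : Fintype Q]
  q0 : Q
  final : Set Q
  trans : Q → TapeSym A → Option ((Q × Dir) × List B)

attribute [instance] TwoWayT.finQ

/-- `TwoWayT.Steps T w c v c'`: on input `⊢w⊣` the transducer can go from
configuration `c` to configuration `c'` producing output `v`. -/
inductive TwoWayT.Steps {A B : Type} (T : TwoWayT A B) (w : List A) :
    T.Q × ℕ → List B → T.Q × ℕ → Prop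
  | refl (c : T.Q × ℕ) : TwoWayT.Steps T w c [] c
  | stepL {q : T.Q} {m : ℕ} {q' : T.Q} {v u : List B} {cf : T.Q × ℕ} :
      T.trans q (tapeAt w m) = some ((q', Dir.left), v) → 1 ≤ m →
      TwoWayT.Steps T w (q', m - 1) u cf → TwoWayT.Steps T w (q, m) (v ++ u) cf
  | stepR {q : T.Q} {m : ℕ} {q' : T.Q} {v u : List B} {cf : T.Q × ℕ} :
      T.trans q (tapeAt w m) = some ((q', Dir.right), v) → m ≤ w.length →
      TwoWayT.Steps T w (q', m + 1) u cf → TwoWayT.Steps T w (q, m) (v ++ u) cf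

/-- The two-way transducer computes the partial function `f`: `f w = some v` iff there
is an accepting run on `⊢w⊣` (from `(q0, 0)` to `(q, |w|+1)` with `q` final)
producing `v`. -/
def TwoWayT.Computes {A B : Type} (T : TwoWayT A B) (f : List A → Option (List B)) : Prop :=
  ∀ w v, f w = some v ↔ ∃ q ∈ T.final, TwoWayT.Steps T w (T.q0, 0) v (q, w.length + 1)

/-! ### Marble transducers -/

/-- Actions of a marble transducer: move left, move right, lift the marble, or drop a
marble of color `c`. -/
inductive MAct (C : Type) where
  | left
  | right
  | lift
  | drop (c : C)

/-- A deterministic marble transducer: finitely many states with an initial state and a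
set of final states, finitely many marble colors `C`, and a partial transition/output
function (common domain) reading the current state, the tape symbol, and the color of
the marble at the current position (if any); on a position carrying a marble the head
may only move left or lift the marble. -/
structure MarbleT (A B : Type) where
  Q : Type
  C : Type
  [finQ : Fintype Q]
  [finC : Fintype C]
  q0 : Q
  final : Set Q
  trans : Q → TapeSym A → Option C → Option ((Q × MAct C) × List B)
  marble_left_or_lift : ∀ q s c p, trans q s (some c) = some p →
    p.1.2 = MAct.left ∨ p.1.2 = MAct.lift

attribute [instance] MarbleT.finQ MarbleT.finC

/-- The color of the marble at position `m`, for a stack `π` of dropped marbles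
(topmost first, positions strictly increasing from the top and all ≥ the head
position). -/
def marbleAt {C : Type} (m : ℕ) : List (C × ℕ) → Option C
  | [] => none
  | (c, p) :: _ => if p = m then some c else none

/-- `MarbleT.Steps T w c v c'`: on input `⊢w⊣` the marble transducer can go from
configuration `c` to configuration `c'` producing output `v`. A configuration is a
triple (state, head position, stack of dropped marbles). -/
inductive MarbleT.Steps {A B : Type} (T : MarbleT A B) (w : List A) :
    T.Q × ℕ × List (T.C × ℕ) → List B → T.Q × ℕ × List (T.C × ℕ) → Prop
  | refl (c : T.Q × ℕ × List (T.C × ℕ)) : MarbleT.Steps T w c [] c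
  | stepL {q : T.Q} {m : ℕ} {π : List (T.C × ℕ)} {q' : T.Q} {v u : List B}
      {cf : T.Q × ℕ × List (T.C × ℕ)} :
      T.trans q (tapeAt w m) (marbleAt m π) = some ((q', MAct.left), v) → 1 ≤ m →
      MarbleT.Steps T w (q', m - 1, π) u cf → MarbleT.Steps T w (q, m, π) (v ++ u) cf
  | stepR {q : T.Q} {m : ℕ} {π : List (T.C × ℕ)} {q' : T.Q} {v u : List B}
      {cf : T.Q × ℕ × List (T.C × ℕ)} :
      marbleAt m π = none →
      T.trans q (tapeAt w m) none = some ((q', MAct.right), v) → m ≤ w.length →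
      MarbleT.Steps T w (q', m + 1, π) u cf → MarbleT.Steps T w (q, m, π) (v ++ u) cf
  | stepLift {q : T.Q} {m : ℕ} {π : List (T.C × ℕ)} {q' : T.Q} {cc : T.C} {v u : List B}
      {cf : T.Q × ℕ × List (T.C × ℕ)} :
      T.trans q (tapeAt w m) (some cc) = some ((q', MAct.lift), v) →
      MarbleT.Steps T w (q', m, π) u cf →
      MarbleT.Steps T w (q, m, (cc, m) :: π) (v ++ u) cf
  | stepDrop {q : T.Q} {m : ℕ} {π : List (T.C × ℕ)} {q' : T.Q} {cc : T.C} {v u : List B}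
      {cf : T.Q × ℕ × List (T.C × ℕ)} :
      marbleAt m π = none →
      T.trans q (tapeAt w m) none = some ((q', MAct.drop cc), v) →
      MarbleT.Steps T w (q', m, (cc, m) :: π) u cf →
      MarbleT.Steps T w (q, m, π) (v ++ u) cf

/-- The marble transducer computes the partial function `f`: `f w = some v` iff there is
an accepting run on `⊢w⊣` (from `(q0, 0, ε)` to `(q, |w|+1, ε)` with `q` final)
producing `v`. -/
def MarbleT.Computes {A B : Type} (T : MarbleT A B) (f : List A → Option (List B)) : Prop :=
  ∀ w v, f w = some v ↔
    ∃ q ∈ T.final, MarbleT.Steps T w (T.q0, 0, []) v (q, w.length + 1, [])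

/-- A `k`-marble transducer: every configuration reachable from the initial
configuration carries at most `k` marbles. -/
def MarbleT.IsKMarble {A B : Type} (T : MarbleT A B) (k : ℕ) : Prop :=
  ∀ (w : List A) (u : List B) (cfg : T.Q × ℕ × List (T.C × ℕ)),
    MarbleT.Steps T w (T.q0, 0, []) u cfg → cfg.2.2.length ≤ k

/-- `f` is computable by a `k`-marble transducer. -/
def ComputableKMarble {A B : Type} (f : List A → List B) (k : ℕ) : Prop :=
  ∃ T : MarbleT A B, T.IsKMarble k ∧ T.Computes (fun w => some (f w))

/-! ### Matrices over ℕ and ℕ-automata -/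

/-- Product of two square matrices over `ℕ` (given as functions). -/
def matMul {Q : Type} [Fintype Q] (M N : Q → Q → ℕ) : Q → Q → ℕ :=
  fun i j => ∑ x : Q, M i x * N x j

/-- Identity matrix over `ℕ`. -/
def matId {Q : Type} [DecidableEq Q] : Q → Q → ℕ :=
  fun i j => if i = j then 1 else 0

/-- Row vector times matrix. -/
def vecMat {Q : Type} [Fintype Q] (v : Q → ℕ) (M : Q → Q → ℕ) : Q → ℕ :=
  fun j => ∑ x : Q, v x * M x j

/-- Matrix times column vector. -/
def matVec {Q : Type} [Fintype Q] (M : Q → Q → ℕ) (v : Q → ℕ) : Q → ℕ :=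
  fun i => ∑ x : Q, M i x * v x

/-- Dot product of two vectors over `ℕ`. -/
def dotProd {Q : Type} [Fintype Q] (v w : Q → ℕ) : ℕ :=
  ∑ x : Q, v x * w x

/-- An `ℕ`-automaton: a finite set of states `Q`, an initial row vector `α`, a weight
matrix `μ a` for every letter `a` (extended to words as a monoid morphism `μW`), and a
final column vector `β`. -/
structure NAut (A : Type) where
  Q : Type
  [finQ : Fintype Q]
  [decQ : DecidableEq Q]
  α : Q → ℕ
  μ : A → Q → Q → ℕ
  β : Q → ℕ

attribute [instance] NAut.finQ NAut.decQ

/-- The monoid morphism `A* → ℕ^{Q×Q}` extending `μ`. -/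
def NAut.μW {A : Type} (T : NAut A) : List A → T.Q → T.Q → ℕ
  | [] => matId
  | a :: w => matMul (T.μ a) (T.μW w)

/-- The total function `g : A* → ℕ` computed by the `ℕ`-automaton: `g w = α·μ(w)·β`. -/
def NAut.g {A : Type} (T : NAut A) (w : List A) : ℕ :=
  dotProd (vecMat T.α (T.μW w)) T.β

/-- Trimness: every state is accessible and co-accessible with nonzero weight. -/
def NAut.Trim {A : Type} (T : NAut A) : Prop :=
  ∀ q : T.Q, (∃ u, 1 ≤ vecMat T.α (T.μW u) q) ∧ (∃ v, 1 ≤ matVec (T.μW v) T.β q)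

/-- A heavy cycle on state `q`: a nonempty word `v` with `μ(v)(q,q) ≥ 2`. -/
def NAut.HeavyCycle {A : Type} (T : NAut A) (q : T.Q) (v : List A) : Prop :=
  v ≠ [] ∧ 2 ≤ T.μW v q q

/-- A barbell from `q` to `q' ≠ q`: a nonempty word `v` with `μ(v)(q,q) ≥ 1`,
`μ(v)(q,q') ≥ 1` and `μ(v)(q',q') ≥ 1`. -/
def NAut.Barbell {A : Type} (T : NAut A) (q q' : T.Q) (v : List A) : Prop :=
  q ≠ q' ∧ v ≠ [] ∧ 1 ≤ T.μW v q q ∧ 1 ≤ T.μW v q q' ∧ 1 ≤ T.μW v q' q'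

/-- Edge of the barbell graph `𝔊`. -/
def NAut.GEdge {A : Type} (T : NAut A) (q1 q2 : T.Q) : Prop :=
  ∃ q q' v, T.Barbell q q' v ∧ (∃ w, 1 ≤ T.μW w q1 q) ∧ (∃ w', 1 ≤ T.μW w' q' q2)

/-- `PathLen G q n`: there is a directed path of length `n` (counting edges) in the
graph `G` ending in `q`. -/
inductive PathLen {Q : Type} (G : Q → Q → Prop) : Q → ℕ → Prop
  | zero (q : Q) : PathLen G q 0
  | succ {p q : Q} {n : ℕ} : PathLen G p n → G p q → PathLen G q (n + 1)

/-- The height of `q` in the graph `G` is `n`: the maximal length of a directed path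
ending in `q` is `n`. -/
def HeightIs {Q : Type} (G : Q → Q → Prop) (q : Q) (n : ℕ) : Prop :=
  PathLen G q n ∧ ∀ m, PathLen G q m → m ≤ n

/-! ### Statement-specific predicates -/

/-- Case (1) of the trichotomy: `|f|` has exponential growth and `f` is not computable
with `k` marbles for any `k`. -/
def MarbleCase1 {A B : Type} (f : List A → List B) : Prop :=
  ExpGrowth (fun w => (f w).length) ∧ ∀ k : ℕ, ¬ ComputableKMarble f k

/-- Case (2) of the trichotomy: `|f|` has `(k+1)`-polynomial growth for some `k`, `f` is
computable with `k` marbles, and `k` is the least possible number of marbles. -/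
def MarbleCase2 {A B : Type} (f : List A → List B) : Prop :=
  ∃ k : ℕ, PolyGrowth (fun w => (f w).length) (k + 1) ∧ ComputableKMarble f k ∧
    ∀ j : ℕ, ComputableKMarble f j → k ≤ j

/-- Case (3) of the trichotomy: `|f|` has `0`-polynomial growth and `f` is computable
with `0` marbles. -/
def MarbleCase3 {A B : Type} (f : List A → List B) : Prop :=
  PolyGrowth (fun w => (f w).length) 0 ∧ ComputableKMarble f 0

/-- The second alternative of Lemma `lem:graph`: `g` has `k`-polynomial growth for some
`k ≥ 0` and the states admit a partition `S_0, …, S_k` satisfying (a), (b), (c). -/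
def NAutPolyCase {A : Type} (T : NAut A) : Prop :=
  ∃ k : ℕ, PolyGrowth T.g k ∧
    ∃ S : T.Q → Fin (k + 1),
      (∀ q q' : T.Q, (∃ w, 1 ≤ T.μW w q q') → S q ≤ S q') ∧
      (∃ Bd : ℕ, ∀ q q' : T.Q, S q = S q' → ∀ w, T.μW w q q' ≤ Bd) ∧
      (∀ q : T.Q, ∃ C : ℕ, ∀ w, vecMat T.α (T.μW w) q ≤ C * w.length ^ (S q : ℕ) + C)


/-! ### Auxiliary material for `stmt13` -/

section Stmt13Aux

open scoped Classical

variable {A : Type} (T : NAut A)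

lemma matMul_assoc {Q : Type} [Fintype Q] (M N P : Q → Q → ℕ) :
    matMul (matMul M N) P = matMul M (matMul N P) := by
  funext i j
  unfold matMul
  simp only [Finset.sum_mul, Finset.mul_sum]
  rw [Finset.sum_comm]
  apply Finset.sum_congr rfl
  intro x _
  apply Finset.sum_congr rfl
  intro t _
  ring

lemma matMul_id_left {Q : Type} [Fintype Q] [DecidableEq Q] (M : Q → Q → ℕ) :
    matMul matId M = M := by
  funext i j
  simp [matMul, matId, ite_mul, one_mul, zero_mul]

lemma matMul_id_right {Q : Type} [Fintype Q] [DecidableEq Q] (M : Q → Q → ℕ) :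
    matMul M matId = M := by
  funext i j
  simp [matMul, matId, mul_ite, mul_one, mul_zero]

lemma NAut.μW_nil : T.μW ([] : List A) = matId := rfl

lemma NAut.μW_append (u v : List A) :
    T.μW (u ++ v) = matMul (T.μW u) (T.μW v) := by
  induction u with
  | nil => simp [NAut.μW, matMul_id_left]
  | cons a u ih =>
      show T.μW (a :: (u ++ v)) = _
      rw [show T.μW (a :: (u ++ v)) = matMul (T.μ a) (T.μW (u ++ v)) from rfl, ih,
        show T.μW (a :: u) = matMul (T.μ a) (T.μW u) from rfl, matMul_assoc]

lemma NAut.μW_single (a : A) : T.μW [a] = T.μ a := by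
  rw [show T.μW [a] = matMul (T.μ a) (T.μW []) from rfl, NAut.μW_nil, matMul_id_right]

lemma le_μW_append (u v : List A) (x t z : T.Q) :
    T.μW u x t * T.μW v t z ≤ T.μW (u ++ v) x z := by
  rw [NAut.μW_append]
  exact Finset.single_le_sum (f := fun s => T.μW u x s * T.μW v s z)
    (fun i _ => Nat.zero_le _) (Finset.mem_univ t)

lemma exists_mid {u v : List A} {x z : T.Q} (h : 1 ≤ T.μW (u ++ v) x z) :
    ∃ t, 1 ≤ T.μW u x t ∧ 1 ≤ T.μW v t z := by
  rw [NAut.μW_append] at h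
  have h' : (∑ s, T.μW u x s * T.μW v s z) ≠ 0 := by
    show matMul (T.μW u) (T.μW v) x z ≠ 0
    omega
  obtain ⟨t, _, ht⟩ := Finset.exists_ne_zero_of_sum_ne_zero h'
  rw [mul_ne_zero_iff] at ht
  exact ⟨t, Nat.one_le_iff_ne_zero.2 ht.1, Nat.one_le_iff_ne_zero.2 ht.2⟩

/-- Reachability with positive weight. -/
def NReach (x z : T.Q) : Prop := ∃ w : List A, 1 ≤ T.μW w x z

lemma NReach.refl (x : T.Q) : NReach T x x := ⟨[], by simp [NAut.μW_nil, matId]⟩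

lemma NReach.trans {x y z : T.Q} (h1 : NReach T x y) (h2 : NReach T y z) :
    NReach T x z := by
  obtain ⟨u, hu⟩ := h1
  obtain ⟨v, hv⟩ := h2
  exact ⟨u ++ v, le_trans (Nat.one_le_iff_ne_zero.2 (by positivity))
    (le_μW_append T u v x y z)⟩


lemma scc_bound (hh : ∀ q v, ¬ T.HeavyCycle q v) {y b : T.Q} (hr : NReach T b y)
    (w : List A) : T.μW w y b ≤ 1 := by
  by_contra hlt
  push_neg at hlt
  have hw : w ≠ [] := by
    rintro rfl
    rw [NAut.μW_nil] at hlt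
    unfold matId at hlt
    split at hlt <;> omega
  obtain ⟨t, ht⟩ := hr
  have h2 : 2 ≤ T.μW (w ++ t) y y := by
    calc (2:ℕ) = 2 * 1 := by ring
    _ ≤ T.μW w y b * T.μW t b y := Nat.mul_le_mul hlt ht
    _ ≤ T.μW (w ++ t) y y := le_μW_append T w t y b y
  exact hh y (w ++ t) ⟨by simp [hw], h2⟩

lemma take_glue (w : List A) {a b : ℕ} (hab : a ≤ b) :
    w.take a ++ (w.take b).drop a = w.take b := by
  conv_rhs => rw [← List.take_append_drop a (w.take b)]
  rw [List.take_take, min_eq_left hab]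

lemma drop_glue (w : List A) {a b : ℕ} (hab : a ≤ b) :
    (w.take b).drop a ++ w.drop b = w.drop a := by
  by_cases hw : a ≤ w.length
  · conv_rhs => rw [← List.take_append_drop b w]
    rw [List.drop_append_of_le_length (by simp; omega)]
  · have h1 : (w.take b).drop a = [] :=
      List.drop_eq_nil_of_le (by simp; omega)
    have h2 : w.drop b = [] := List.drop_eq_nil_of_le (by omega)
    have h3 : w.drop a = [] := List.drop_eq_nil_of_le (by omega)
    rw [h1, h2, h3, List.nil_append]

lemma seg_glue (w : List A) {a b c : ℕ} (hab : a ≤ b) (hbc : b ≤ c) :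
    (w.take b).drop a ++ (w.take c).drop b = (w.take c).drop a := by
  by_cases hw : a ≤ w.length
  · conv_rhs => rw [← take_glue w hbc]
    rw [List.drop_append_of_le_length (by simp; omega)]
  · have h1 : (w.take b).drop a = [] :=
      List.drop_eq_nil_of_le (by simp; omega)
    have h2 : (w.take c).drop b = [] :=
      List.drop_eq_nil_of_le (by simp; omega)
    have h3 : (w.take c).drop a = [] :=
      List.drop_eq_nil_of_le (by simp; omega)
    rw [h1, h2, h3, List.nil_append]

lemma seg_self_nil (w : List A) (a : ℕ) : (w.take a).drop a = [] :=
  List.drop_eq_nil_of_le (by simp)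

lemma one_le_μW_nil (x : T.Q) : 1 ≤ T.μW ([] : List A) x x := by
  rw [NAut.μW_nil]; simp [matId]

lemma step_mono {p : ℕ → ℕ} {k : ℕ} (h : ∀ i, i < k → p i ≤ p (i+1)) :
    ∀ i j, i ≤ j → j ≤ k → p i ≤ p j := by
  intro i j
  induction j with
  | zero =>
      intro hij _
      have : i = 0 := by omega
      subst this; exact le_rfl
  | succ n ihn =>
      intro hij hjk
      rcases Nat.lt_or_ge i (n+1) with hlt | hge
      · exact le_trans (ihn (by omega) (by omega)) (h n (by omega))
      · have : i = n + 1 := by omega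
        subst this; exact le_rfl

lemma wchain (w : List A) :
    ∀ (k : ℕ) (p : ℕ → ℕ), (∀ i, i < k → p i ≤ p (i+1)) →
    ∀ (x z : T.Q), 1 ≤ T.μW (w.take (p k)) x z →
    ∃ st : ℕ → T.Q, st k = z ∧ 1 ≤ T.μW (w.take (p 0)) x (st 0) ∧
      ∀ i j, i ≤ j → j ≤ k → 1 ≤ T.μW ((w.take (p j)).drop (p i)) (st i) (st j) := by
  intro k
  induction k with
  | zero =>
      intro p _ x z h
      refine ⟨fun _ => z, rfl, h, ?_⟩
      intro i j hij hj
      have hi0 : i = 0 := by omega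
      have hj0 : j = 0 := by omega
      subst hi0; subst hj0
      rw [seg_self_nil]
      exact one_le_μW_nil T z
  | succ k ih =>
      intro p hmono x z h
      rw [← take_glue w (hmono k (by omega))] at h
      obtain ⟨t, h1, h2⟩ := exists_mid T h
      obtain ⟨st', hk, h0, hpair⟩ := ih p (fun i hi => hmono i (by omega)) x t h1
      refine ⟨fun i => if i = k+1 then z else st' i, by simp, ?_, ?_⟩
      · simp only [show ¬(0 = k+1) by omega, if_false]
        exact h0
      intro i j hij hj
      by_cases hjk : j = k + 1
      · subst hjk
        by_cases hik : i = k + 1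
        · subst hik
          simp only [if_pos rfl]
          rw [seg_self_nil]
          exact one_le_μW_nil T z
        · have hik' : i ≤ k := by omega
          simp only [hik, if_false, if_pos rfl]
          have hcomp : 1 ≤ T.μW ((w.take (p k)).drop (p i)) (st' i) t := hk ▸ hpair i k hik' le_rfl
          calc (1:ℕ) = 1 * 1 := by ring
          _ ≤ T.μW ((w.take (p k)).drop (p i)) (st' i) t *
              T.μW ((w.take (p (k+1))).drop (p k)) t z := Nat.mul_le_mul hcomp h2
          _ ≤ T.μW ((w.take (p k)).drop (p i) ++ (w.take (p (k+1))).drop (p k)) (st' i) z :=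
              le_μW_append T _ _ _ _ _
          _ = T.μW ((w.take (p (k+1))).drop (p i)) (st' i) z := by
              rw [seg_glue w (step_mono hmono i k hik' (by omega)) (hmono k (by omega))]
      · have hik : i ≤ k := by omega
        have hjk' : j ≤ k := by omega
        simp only [show ¬(i = k+1) by omega, show ¬(j = k+1) by omega, if_false]
        exact hpair i j hij hjk'

lemma wchain2 (w : List A) :
    ∀ (k : ℕ) (p : ℕ → ℕ), (∀ i, i < k → p i ≤ p (i+1)) →
    ∀ (x z : T.Q), 1 ≤ T.μW (w.drop (p 0)) x z →
    ∃ st : ℕ → T.Q, st 0 = x ∧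
      (∀ i j, i ≤ j → j ≤ k → 1 ≤ T.μW ((w.take (p j)).drop (p i)) (st i) (st j)) ∧
      1 ≤ T.μW (w.drop (p k)) (st k) z := by
  intro k
  induction k with
  | zero =>
      intro p _ x z h
      refine ⟨fun _ => x, rfl, ?_, h⟩
      intro i j hij hj
      have hi0 : i = 0 := by omega
      have hj0 : j = 0 := by omega
      subst hi0; subst hj0
      rw [seg_self_nil]
      exact one_le_μW_nil T x
  | succ k ih =>
      intro p hmono x z h
      rw [← drop_glue w (hmono 0 (by omega))] at h
      obtain ⟨t, h1, h2⟩ := exists_mid T h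
      obtain ⟨st', h0', hpair, hend⟩ :=
        ih (fun i => p (i+1)) (fun i hi => hmono (i+1) (by omega)) t z h2
      refine ⟨fun i => if i = 0 then x else st' (i-1), if_pos rfl, ?_, ?_⟩
      · intro i j hij hj
        by_cases hi0 : i = 0
        · subst hi0
          by_cases hj0 : j = 0
          · subst hj0
            simp only [if_pos rfl]
            rw [seg_self_nil]
            exact one_le_μW_nil T x
          · simp only [if_pos rfl, hj0, if_false]
            have hcomp : 1 ≤ T.μW ((w.take (p j)).drop (p 1)) t (st' (j-1)) := by
              have := hpair 0 (j-1) (by omega) (by omega)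
              rw [h0'] at this
              have hj1 : j - 1 + 1 = j := by omega
              rw [hj1] at this
              exact this
            calc (1:ℕ) = 1 * 1 := by ring
            _ ≤ T.μW ((w.take (p 1)).drop (p 0)) x t *
                T.μW ((w.take (p j)).drop (p 1)) t (st' (j-1)) := Nat.mul_le_mul h1 hcomp
            _ ≤ T.μW ((w.take (p 1)).drop (p 0) ++ (w.take (p j)).drop (p 1)) x (st' (j-1)) :=
                le_μW_append T _ _ _ _ _
            _ = T.μW ((w.take (p j)).drop (p 0)) x (st' (j-1)) := by
                rw [seg_glue w (hmono 0 (by omega)) (step_mono hmono 1 j (by omega) hj)]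
        · have hj0 : j ≠ 0 := by omega
          simp only [hi0, hj0, if_false]
          have := hpair (i-1) (j-1) (by omega) (by omega)
          have hi1 : i - 1 + 1 = i := by omega
          have hj1 : j - 1 + 1 = j := by omega
          rw [hi1, hj1] at this
          exact this
      · simp only [show ¬(k + 1 = 0) by omega, if_false]
        have : k + 1 - 1 = k := by omega
        rw [this]
        exact hend


lemma prehomog {κ : Type} [Fintype κ] [Nonempty κ] :
    ∀ (m : ℕ), ∃ N : ℕ, ∀ (S : Finset ℕ) (col : ℕ → ℕ → κ), N ≤ S.card →
      ∃ (U : Finset ℕ) (cf : ℕ → κ), U ⊆ S ∧ U.card = m ∧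
        ∀ i ∈ U, ∀ j ∈ U, i < j → col i j = cf i := by
  intro m
  induction m with
  | zero =>
      exact ⟨0, fun S col _ =>
        ⟨∅, fun _ => Classical.arbitrary κ, by simp, by simp, by simp⟩⟩
  | succ m ih =>
      obtain ⟨N, hN⟩ := ih
      refine ⟨Fintype.card κ * N + 1, ?_⟩
      intro S col hcard
      have hne : S.Nonempty := Finset.card_pos.1 (by omega)
      set x := S.min' hne with hx
      have hxS : x ∈ S := S.min'_mem hne
      set S' := S.erase x with hS'
      have hcard' : Fintype.card κ * N ≤ S'.card := by
        rw [hS', Finset.card_erase_of_mem hxS]; omega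
      obtain ⟨c, _, hc⟩ := Finset.exists_le_card_fiber_of_mul_le_card_of_maps_to
        (f := fun v => col x v) (t := (Finset.univ : Finset κ))
        (fun a _ => Finset.mem_univ _) Finset.univ_nonempty
        (by simpa using hcard')
      obtain ⟨U', cf', hU'sub, hU'card, hU'col⟩ :=
        hN (S'.filter fun v => col x v = c) col hc
      have hU'S' : ∀ v ∈ U', v ∈ S' := fun v hv => (Finset.filter_subset _ _) (hU'sub hv)
      have hgt : ∀ v ∈ U', x < v := by
        intro v hv
        have hvS' := hU'S' v hv
        have hne' := (Finset.mem_erase.1 hvS').1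
        exact lt_of_le_of_ne (S.min'_le v (Finset.mem_of_mem_erase hvS')) (Ne.symm hne')
      refine ⟨insert x U', fun v => if v = x then c else cf' v, ?_, ?_, ?_⟩
      · intro v hv
        rcases Finset.mem_insert.1 hv with rfl | hv'
        · exact hxS
        · exact Finset.mem_of_mem_erase (hU'S' v hv')
      · rw [Finset.card_insert_of_notMem, hU'card]
        intro hmem
        exact absurd rfl (Finset.mem_erase.1 (hU'S' x hmem)).1
      · intro i hi j hj hij
        rcases Finset.mem_insert.1 hi with rfl | hi'
        · have hj' : j ∈ U' := by
            rcases Finset.mem_insert.1 hj with rfl | h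
            · omega
            · exact h
          have := (Finset.mem_filter.1 (hU'sub hj')).2
          simpa using this
        · have hxi : x < i := hgt i hi'
          have hj' : j ∈ U' := by
            rcases Finset.mem_insert.1 hj with rfl | h
            · omega
            · exact h
          have hne2 : i ≠ x := by omega
          simp only [if_neg hne2]
          exact hU'col i hi' j hj' hij

lemma ramsey_pairs {κ : Type} [Fintype κ] [Nonempty κ] (s : ℕ) :
    ∃ N : ℕ, ∀ (S : Finset ℕ) (col : ℕ → ℕ → κ), N ≤ S.card →
      ∃ (U : Finset ℕ) (c : κ), U ⊆ S ∧ s ≤ U.card ∧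
        ∀ i ∈ U, ∀ j ∈ U, i < j → col i j = c := by
  obtain ⟨N, hN⟩ := prehomog (κ := κ) (Fintype.card κ * s)
  refine ⟨N, ?_⟩
  intro S col hcard
  obtain ⟨U, cf, hsub, hucard, hcol⟩ := hN S col hcard
  obtain ⟨c, _, hc⟩ := Finset.exists_le_card_fiber_of_mul_le_card_of_maps_to
    (f := cf) (t := (Finset.univ : Finset κ)) (fun a _ => Finset.mem_univ _)
    Finset.univ_nonempty (le_of_eq (by rw [hucard, Finset.card_univ]))
  refine ⟨U.filter (fun v => cf v = c), c, (Finset.filter_subset _ _).trans hsub, hc, ?_⟩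
  intro i hi j hj hij
  have hi' := Finset.mem_filter.1 hi
  have hj' := Finset.mem_filter.1 hj
  rw [hcol i hi'.1 j hj'.1 hij, hi'.2]


lemma cuts_bounded (hh : ∀ q v, ¬ T.HeavyCycle q v) {q q' y z : T.Q}
    (hb : ∀ α β v, T.Barbell α β v → NReach T q α → NReach T β q' → False)
    (hqy : NReach T q y) (hzq' : NReach T z q') :
    ∃ CC : ℕ, ∀ (w : List A) (S : Finset ℕ),
      (∀ i ∈ S, i < w.length ∧ ∃ b a : T.Q,
        ((NReach T y b ∧ NReach T b y) ∧ ¬(NReach T y a ∧ NReach T a y)) ∧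
        1 ≤ T.μW (w.take i) y b ∧ 1 ≤ T.μW ((w.take (i+1)).drop i) b a ∧
        1 ≤ T.μW (w.drop (i+1)) a z) → S.card ≤ CC := by
  classical
  set n := Fintype.card T.Q with hn
  obtain ⟨NR, hNR⟩ := ramsey_pairs (κ := T.Q → T.Q → Bool) (2*n+4)
  refine ⟨(Fintype.card (T.Q × T.Q)) * NR, ?_⟩
  intro w S hS
  by_contra hbig
  push_neg at hbig
  -- choose the pair (b,a) for each valid cut
  have hSel : ∀ i, ∃ ba : T.Q × T.Q, i ∈ S →
      ((NReach T y ba.1 ∧ NReach T ba.1 y) ∧ ¬(NReach T y ba.2 ∧ NReach T ba.2 y)) ∧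
      1 ≤ T.μW (w.take i) y ba.1 ∧ 1 ≤ T.μW ((w.take (i+1)).drop i) ba.1 ba.2 ∧
      1 ≤ T.μW (w.drop (i+1)) ba.2 z := by
    intro i
    by_cases hi : i ∈ S
    · obtain ⟨_, b, a, hcond⟩ := hS i hi
      exact ⟨(b, a), fun _ => hcond⟩
    · exact ⟨(y, y), fun h => absurd h hi⟩
  choose f hf using hSel
  obtain ⟨ba, _, hfib⟩ := Finset.exists_lt_card_fiber_of_mul_lt_card_of_maps_to
    (f := f) (t := (Finset.univ : Finset (T.Q × T.Q)))
    (fun i _ => Finset.mem_univ _) (by simpa using hbig)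
  set F := S.filter (fun i => f i = ba) with hF
  set b := ba.1 with hbdef
  set a := ba.2 with hadef
  have hFval : ∀ i ∈ F, i < w.length ∧
      ((NReach T y b ∧ NReach T b y) ∧ ¬(NReach T y a ∧ NReach T a y)) ∧
      1 ≤ T.μW (w.take i) y b ∧ 1 ≤ T.μW ((w.take (i+1)).drop i) b a ∧
      1 ≤ T.μW (w.drop (i+1)) a z := by
    intro i hi
    have hi' := Finset.mem_filter.1 hi
    have h1 := (hS i hi'.1).1
    have h2 := hf i hi'.1
    rw [hi'.2] at h2
    exact ⟨h1, h2⟩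
  -- Ramsey on the cuts of F
  set col : ℕ → ℕ → (T.Q → T.Q → Bool) :=
    fun i j => fun x1 x2 => decide (1 ≤ T.μW ((w.take j).drop i) x1 x2) with hcol
  obtain ⟨U, e, hUF, hUcard, hmonoc⟩ := hNR F col (le_of_lt hfib)
  set l := U.sort (· ≤ ·) with hl
  have hlen : 2*n+4 ≤ l.length := by
    rw [hl, Finset.length_sort]; exact hUcard
  set p : ℕ → ℕ := fun i => l.getD i 0 with hp
  have hmem : ∀ i, i < l.length → p i ∈ U := by
    intro i hi
    have : l.getD i 0 ∈ l := by
      rw [List.getD_eq_getElem l 0 hi]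
      exact List.getElem_mem _
    exact (Finset.mem_sort _).1 this
  have hsorted : List.Pairwise (· < ·) l := (Finset.sortedLT_sort U).pairwise
  have hplt : ∀ i j, i < j → j < l.length → p i < p j := by
    intro i j hij hj
    have h := List.pairwise_iff_get.1 hsorted ⟨i, by omega⟩ ⟨j, hj⟩ hij
    show l.getD i 0 < l.getD j 0
    rw [List.getD_eq_getElem l 0 (by omega : i < l.length), List.getD_eq_getElem l 0 hj]
    simpa [List.get_eq_getElem] using h
  have hval : ∀ i, i < l.length → (p i < w.length ∧
      1 ≤ T.μW (w.take (p i)) y b ∧ 1 ≤ T.μW ((w.take (p i + 1)).drop (p i)) b a ∧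
      1 ≤ T.μW (w.drop (p i + 1)) a z) := by
    intro i hi
    have h := hFval (p i) (hUF (hmem i hi))
    exact ⟨h.1, h.2.2.1, h.2.2.2.1, h.2.2.2.2⟩
  have hbC : NReach T y b ∧ NReach T b y :=
    (hFval (p 0) (hUF (hmem 0 (by omega)))).2.1.1
  have haC : ¬(NReach T y a ∧ NReach T a y) :=
    (hFval (p 0) (hUF (hmem 0 (by omega)))).2.1.2
  set mid := p (n+1) with hmid
  -- prefix chain
  obtain ⟨st1, hst1k, hst10, hpair1⟩ := wchain T w (n+1) p
    (fun i hi => le_of_lt (hplt i (i+1) (by omega) (by omega))) y b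
    (hval (n+1) (by omega)).2.1
  -- suffix chain
  set q2 : ℕ → ℕ := fun i => if i = 0 then mid+1 else p (n+1+i) with hq2
  have hq2mono : ∀ i, i < n+2 → q2 i ≤ q2 (i+1) := by
    intro i hi
    rcases Nat.eq_zero_or_pos i with rfl | hpos
    · show q2 0 ≤ q2 1
      have : mid < p (n+2) := hplt (n+1) (n+2) (by omega) (by omega)
      simp only [hq2, if_pos rfl, if_neg (by omega : (1:ℕ) ≠ 0)]
      rw [show n + 1 + 1 = n + 2 by omega]
      omega
    · have h1 : i ≠ 0 := by omega
      have h2 : i + 1 ≠ 0 := by omega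
      simp only [hq2, if_neg h1, if_neg h2]
      exact le_of_lt (hplt (n+1+i) (n+1+(i+1)) (by omega) (by omega))
  obtain ⟨st2, hst20, hpair2, hend2⟩ := wchain2 T w (n+2) q2 hq2mono a z
    (by
      show 1 ≤ T.μW (w.drop (q2 0)) a z
      simp only [hq2, if_pos rfl]
      exact (hval (n+1) (by omega)).2.2.2)
  -- pigeonhole helper
  have pigeon : ∀ (g : ℕ → T.Q), ∃ u v, u < v ∧ v ≤ n+1 ∧ g u = g v := by
    intro g
    obtain ⟨u0, v0, hne, heq⟩ := Fintype.exists_ne_map_eq_of_card_lt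
      (fun i : Fin (n+2) => g i.val)
      (by simp only [Fintype.card_fin]; omega)
    rcases Nat.lt_or_ge u0.val v0.val with h | h
    · exact ⟨u0.val, v0.val, h, by omega, heq⟩
    · have hne' : u0.val ≠ v0.val := fun hcon => hne (Fin.ext hcon)
      exact ⟨v0.val, u0.val, by omega, by omega, heq.symm⟩
  obtain ⟨u, v, huv, hvle, heqα⟩ := pigeon st1
  set α := st1 u with hα
  obtain ⟨u', v', huv', hvle', heqβ⟩ := pigeon (fun i => st2 (i+1))
  set β := st2 (u'+1) with hβ
  -- transfer of positivity through the common color e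
  have he : ∀ i j : ℕ, i ∈ U → j ∈ U → i < j → ∀ x1 x2 : T.Q,
      ((1 ≤ T.μW ((w.take j).drop i) x1 x2) ↔ e x1 x2 = true) := by
    intro i j hi hj hij x1 x2
    have hc : col i j = e := hmonoc i hi j hj hij
    have hc' : decide (1 ≤ T.μW ((w.take j).drop i) x1 x2) = e x1 x2 := by
      rw [← hc]
    rw [← hc']
    exact (Iff.symm decide_eq_true_iff)
  -- the three barbell relations at the level of e
  have eαα : e α α = true := by
    have hrel : 1 ≤ T.μW ((w.take (p v)).drop (p u)) α α := by
      have := hpair1 u v (le_of_lt huv) hvle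
      rw [← heqα] at this
      exact this
    exact (he (p u) (p v) (hmem u (by omega)) (hmem v (by omega))
      (hplt u v huv (by omega)) α α).1 hrel
  have eββ : e β β = true := by
    have hrel : 1 ≤ T.μW ((w.take (q2 (v'+1))).drop (q2 (u'+1))) β β := by
      have := hpair2 (u'+1) (v'+1) (by omega) (by omega)
      rw [← heqβ] at this
      exact this
    have hq2u : q2 (u'+1) = p (n+2+u') := by
      simp only [hq2, if_neg (by omega : u'+1 ≠ 0)]
      congr 1
      omega
    have hq2v : q2 (v'+1) = p (n+2+v') := by
      simp only [hq2, if_neg (by omega : v'+1 ≠ 0)]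
      congr 1
      omega
    rw [hq2u, hq2v] at hrel
    exact (he (p (n+2+u')) (p (n+2+v')) (hmem _ (by omega)) (hmem _ (by omega))
      (hplt _ _ (by omega) (by omega)) β β).1 hrel
  have eαβ : e α β = true := by
    have c1 : 1 ≤ T.μW ((w.take mid).drop (p u)) α b := by
      have := hpair1 u (n+1) (by omega) le_rfl
      rw [hst1k] at this
      exact this
    have c2 : 1 ≤ T.μW ((w.take (mid+1)).drop mid) b a := (hval (n+1) (by omega)).2.2.1
    have c3 : 1 ≤ T.μW ((w.take (q2 (u'+1))).drop (mid+1)) a β := by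
      have := hpair2 0 (u'+1) (by omega) (by omega)
      rw [hst20] at this
      simp only [hq2, if_pos rfl] at this
      exact this
    have hq2u : q2 (u'+1) = p (n+2+u') := by
      simp only [hq2, if_neg (by omega : u'+1 ≠ 0)]
      congr 1
      omega
    have hpumid : p u ≤ mid := le_of_lt (hplt u (n+1) (by omega) (by omega))
    have hmidq2 : mid + 1 ≤ q2 (u'+1) := by
      rw [hq2u]
      exact hplt (n+1) (n+2+u') (by omega) (by omega)
    have step1 : 1 ≤ T.μW ((w.take (mid+1)).drop (p u)) α a := by
      calc (1:ℕ) = 1 * 1 := by ring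
      _ ≤ T.μW ((w.take mid).drop (p u)) α b * T.μW ((w.take (mid+1)).drop mid) b a :=
          Nat.mul_le_mul c1 c2
      _ ≤ T.μW ((w.take mid).drop (p u) ++ (w.take (mid+1)).drop mid) α a :=
          le_μW_append T _ _ _ _ _
      _ = T.μW ((w.take (mid+1)).drop (p u)) α a := by
          rw [seg_glue w hpumid (by omega)]
    have step2 : 1 ≤ T.μW ((w.take (q2 (u'+1))).drop (p u)) α β := by
      calc (1:ℕ) = 1 * 1 := by ring
      _ ≤ T.μW ((w.take (mid+1)).drop (p u)) α a *
          T.μW ((w.take (q2 (u'+1))).drop (mid+1)) a β := Nat.mul_le_mul step1 c3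
      _ ≤ T.μW ((w.take (mid+1)).drop (p u) ++ (w.take (q2 (u'+1))).drop (mid+1)) α β :=
          le_μW_append T _ _ _ _ _
      _ = T.μW ((w.take (q2 (u'+1))).drop (p u)) α β := by
          rw [seg_glue w (by omega) hmidq2]
    rw [hq2u] at step2
    exact (he (p u) (p (n+2+u')) (hmem u (by omega)) (hmem _ (by omega))
      (hplt u (n+2+u') (by omega) (by omega)) α β).1 step2
  -- the barbell word
  set V := (w.take (p 1)).drop (p 0) with hV
  have hcolV : ∀ x1 x2 : T.Q, (1 ≤ T.μW V x1 x2) ↔ e x1 x2 = true :=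
    fun x1 x2 => he (p 0) (p 1) (hmem 0 (by omega)) (hmem 1 (by omega))
      (hplt 0 1 (by omega) (by omega)) x1 x2
  have hVne : V ≠ [] := by
    have hlenV : 0 < V.length := by
      rw [hV, List.length_drop, List.length_take]
      have h01 : p 0 < p 1 := hplt 0 1 (by omega) (by omega)
      have h1w : p 1 < w.length := (hval 1 (by omega)).1
      omega
    exact List.ne_nil_of_length_pos hlenV
  -- α and β are distinct
  have hαy : NReach T α y := by
    have c1 : 1 ≤ T.μW ((w.take mid).drop (p u)) α b := by
      have := hpair1 u (n+1) (by omega) le_rfl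
      rw [hst1k] at this
      exact this
    exact (NReach.trans T ⟨_, c1⟩ hbC.2)
  have hβy : ¬ NReach T β y := by
    intro hc
    have c3 : 1 ≤ T.μW ((w.take (q2 (u'+1))).drop (mid+1)) a β := by
      have := hpair2 0 (u'+1) (by omega) (by omega)
      rw [hst20] at this
      simp only [hq2, if_pos rfl] at this
      exact this
    have c2 : 1 ≤ T.μW ((w.take (mid+1)).drop mid) b a := (hval (n+1) (by omega)).2.2.1
    exact haC ⟨NReach.trans T hbC.1 ⟨_, c2⟩, NReach.trans T ⟨_, c3⟩ hc⟩
  have hαβ : α ≠ β := fun hcon => hβy (hcon ▸ hαy)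
  -- assemble the barbell and contradict hb
  have hbarb : T.Barbell α β V :=
    ⟨hαβ, hVne, (hcolV α α).2 eαα, (hcolV α β).2 eαβ, (hcolV β β).2 eββ⟩
  have hqα : NReach T q α := by
    exact NReach.trans T hqy (NReach.trans T ⟨w.take (p 0), hst10⟩
      ⟨(w.take (p u)).drop (p 0), hpair1 0 u (by omega) (by omega)⟩)
  have hβq' : NReach T β q' := by
    have h1 : 1 ≤ T.μW ((w.take (q2 (n+2))).drop (q2 (u'+1))) β (st2 (n+2)) :=
      hpair2 (u'+1) (n+2) (by omega) le_rfl
    exact NReach.trans T (NReach.trans T ⟨_, h1⟩ ⟨_, hend2⟩) hzq'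
  exact hb α β V hbarb hqα hβq'


lemma ite_sum_const {P : Prop} [Decidable P] (s : Finset T.Q) (F : T.Q → ℕ) :
    (∑ t ∈ s, if P then F t else 0) = if P then ∑ t ∈ s, F t else 0 := by
  split <;> simp

lemma seg_singleton (w : List A) (i : ℕ) (h : i < w.length) :
    (w.take (i+1)).drop i = [w.get ⟨i, h⟩] := by
  rw [List.drop_take, show i+1-i = 1 by omega, List.take_one_drop_eq_of_lt_length h]

lemma decomp (z : T.Q) (C : T.Q → Prop) (hz : ∀ x, C x → x ≠ z) :
    ∀ (w : List A) (x : T.Q), C x →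
      T.μW w x z ≤ ∑ i ∈ Finset.range w.length, ∑ b : T.Q, ∑ a : T.Q,
        (if C b ∧ ¬ C a then
          T.μW (w.take i) x b * T.μW ((w.take (i+1)).drop i) b a * T.μW (w.drop (i+1)) a z
        else 0) := by
  intro w
  induction w with
  | nil =>
      intro x hx
      simp [NAut.μW_nil, matId, hz x hx]
  | cons c w' ih =>
      intro x hx
      have hL : T.μW (c :: w') x z = ∑ t : T.Q, T.μ c x t * T.μW w' t z := rfl
      rw [hL, ← Finset.sum_filter_add_sum_filter_not Finset.univ (fun t => C t)
        (fun t => T.μ c x t * T.μW w' t z)]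
      rw [List.length_cons, Finset.sum_range_succ']
      have hgoal0 : (∑ t ∈ Finset.univ.filter (fun t => ¬ C t), T.μ c x t * T.μW w' t z) =
          ∑ b : T.Q, ∑ a : T.Q, (if C b ∧ ¬ C a then
            T.μW ((c :: w').take 0) x b * T.μW (((c :: w').take (0+1)).drop 0) b a *
            T.μW ((c :: w').drop (0+1)) a z else 0) := by
        have hsimp : ∀ b a : T.Q, (if C b ∧ ¬ C a then
            T.μW ((c :: w').take 0) x b * T.μW (((c :: w').take (0+1)).drop 0) b a *
            T.μW ((c :: w').drop (0+1)) a z else 0)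
            = (if C b ∧ ¬ C a then matId x b * T.μ c b a * T.μW w' a z else 0) := by
          intro b a
          simp [NAut.μW_nil, NAut.μW_single]
        simp only [hsimp]
        rw [Finset.sum_eq_single_of_mem x (Finset.mem_univ x)]
        · rw [Finset.sum_filter]
          apply Finset.sum_congr rfl
          intro a _
          by_cases hca : C a
          · simp [hca]
          · simp [hca, hx, matId]
        · intro b _ hbx
          apply Finset.sum_eq_zero
          intro a _
          have hm : matId x b = 0 := by
            unfold matId
            rw [if_neg (Ne.symm hbx)]
          split <;> simp [hm]
      have hgoalB : (∑ t ∈ Finset.univ.filter (fun t => C t), T.μ c x t * T.μW w' t z) ≤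
          ∑ i ∈ Finset.range w'.length, ∑ b : T.Q, ∑ a : T.Q,
            (if C b ∧ ¬ C a then
              T.μW ((c :: w').take (i+1)) x b * T.μW (((c :: w').take (i+1+1)).drop (i+1)) b a *
              T.μW ((c :: w').drop (i+1+1)) a z else 0) := by
        have hlist : ∀ i : ℕ, (((c :: w').take (i+1+1)).drop (i+1)) = (w'.take (i+1)).drop i := by
          intro i
          rfl
        have hlist2 : ∀ i : ℕ, ((c :: w').drop (i+1+1)) = w'.drop (i+1) := by
          intro i
          rfl
        have hlist3 : ∀ i : ℕ, ((c :: w').take (i+1)) = c :: w'.take i := by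
          intro i
          rfl
        simp only [hlist, hlist2, hlist3]
        calc ∑ t ∈ Finset.univ.filter (fun t => C t), T.μ c x t * T.μW w' t z
            ≤ ∑ t ∈ Finset.univ.filter (fun t => C t), T.μ c x t *
              (∑ i ∈ Finset.range w'.length, ∑ b : T.Q, ∑ a : T.Q,
                (if C b ∧ ¬ C a then T.μW (w'.take i) t b * T.μW ((w'.take (i+1)).drop i) b a *
                  T.μW (w'.drop (i+1)) a z else 0)) := by
              apply Finset.sum_le_sum
              intro t ht
              exact Nat.mul_le_mul le_rfl (ih t (Finset.mem_filter.1 ht).2)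
        _ = ∑ i ∈ Finset.range w'.length, ∑ t ∈ Finset.univ.filter (fun t => C t),
              ∑ b : T.Q, ∑ a : T.Q, (T.μ c x t * if C b ∧ ¬ C a then
                T.μW (w'.take i) t b * T.μW ((w'.take (i+1)).drop i) b a *
                T.μW (w'.drop (i+1)) a z else 0) := by
              simp only [Finset.mul_sum]
              exact Finset.sum_comm
        _ ≤ _ := by
              apply Finset.sum_le_sum
              intro i _
              rw [Finset.sum_comm]
              apply Finset.sum_le_sum
              intro b _
              rw [Finset.sum_comm]
              apply Finset.sum_le_sum
              intro a _
              simp only [mul_ite, mul_zero]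
              rw [ite_sum_const]
              by_cases hcond : C b ∧ ¬ C a
              · rw [if_pos hcond, if_pos hcond]
                calc ∑ t ∈ Finset.univ.filter (fun t => C t),
                      T.μ c x t * (T.μW (w'.take i) t b * T.μW ((w'.take (i+1)).drop i) b a *
                        T.μW (w'.drop (i+1)) a z)
                    = ∑ t ∈ Finset.univ.filter (fun t => C t),
                      (T.μ c x t * T.μW (w'.take i) t b) *
                        (T.μW ((w'.take (i+1)).drop i) b a * T.μW (w'.drop (i+1)) a z) := by
                      apply Finset.sum_congr rfl
                      intro t _
                      ring
                _ = (∑ t ∈ Finset.univ.filter (fun t => C t), T.μ c x t * T.μW (w'.take i) t b) *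
                      (T.μW ((w'.take (i+1)).drop i) b a * T.μW (w'.drop (i+1)) a z) :=
                      (Finset.sum_mul _ _ _).symm
                _ ≤ (∑ t : T.Q, T.μ c x t * T.μW (w'.take i) t b) *
                      (T.μW ((w'.take (i+1)).drop i) b a * T.μW (w'.drop (i+1)) a z) :=
                      Nat.mul_le_mul
                        (Finset.sum_le_sum_of_subset (Finset.filter_subset _ _)) le_rfl
                _ = T.μW (c :: w'.take i) x b *
                      (T.μW ((w'.take (i+1)).drop i) b a * T.μW (w'.drop (i+1)) a z) := rfl
                _ = T.μW (c :: w'.take i) x b * T.μW ((w'.take (i+1)).drop i) b a *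
                      T.μW (w'.drop (i+1)) a z := by ring
              · rw [if_neg hcond, if_neg hcond]
      exact Nat.add_le_add hgoalB (le_of_eq hgoal0)

lemma main_bound [Fintype A] (hh : ∀ q v, ¬ T.HeavyCycle q v) {q q' : T.Q}
    (hb : ∀ α β v, T.Barbell α β v → NReach T q α → NReach T β q' → False) :
    ∀ (m : ℕ) (y z : T.Q),
      (Finset.univ.filter (fun x => NReach T y x ∧ NReach T x z)).card ≤ m →
      NReach T q y → NReach T z q' → ∃ B, ∀ w, T.μW w y z ≤ B := by
  intro m
  induction m with
  | zero =>
      intro y z hcard hqy hzq'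
      refine ⟨0, fun w => ?_⟩
      by_contra hc
      push_neg at hc
      have hyz : NReach T y z := ⟨w, hc⟩
      have hy : y ∈ Finset.univ.filter (fun x => NReach T y x ∧ NReach T x z) :=
        Finset.mem_filter.2 ⟨Finset.mem_univ y, NReach.refl T y, hyz⟩
      have := Finset.card_pos.2 ⟨y, hy⟩
      omega
  | succ m ih =>
      intro y z hcard hqy hzq'
      by_cases hyz : NReach T y z
      swap
      · refine ⟨0, fun w => ?_⟩
        by_contra hc
        push_neg at hc
        exact hyz ⟨w, hc⟩
      by_cases hzy : NReach T z y
      · exact ⟨1, fun w => scc_bound T hh hzy w⟩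
      have hzC : ∀ x : T.Q, (NReach T y x ∧ NReach T x y) → x ≠ z := by
        rintro x ⟨h1, h2⟩ rfl
        exact hzy h2
      -- bounds for lower states by induction
      have hIH : ∀ a : T.Q, ∃ Ba : ℕ,
          (NReach T y a ∧ ¬(NReach T y a ∧ NReach T a y)) → ∀ u, T.μW u a z ≤ Ba := by
        intro a
        by_cases hcond : NReach T y a ∧ ¬(NReach T y a ∧ NReach T a y) ∧ NReach T a z
        · obtain ⟨h1, h2, h3⟩ := hcond
          have hss : Finset.univ.filter (fun x => NReach T a x ∧ NReach T x z) ⊂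
              Finset.univ.filter (fun x => NReach T y x ∧ NReach T x z) := by
            rw [Finset.ssubset_iff_of_subset]
            · refine ⟨y, Finset.mem_filter.2 ⟨Finset.mem_univ y, NReach.refl T y, hyz⟩, ?_⟩
              intro hy
              have hay : NReach T a y := (Finset.mem_filter.1 hy).2.1
              exact h2 ⟨h1, hay⟩
            · intro x hx
              have hx' := (Finset.mem_filter.1 hx).2
              exact Finset.mem_filter.2 ⟨Finset.mem_univ x, NReach.trans T h1 hx'.1, hx'.2⟩
          have hlt := Finset.card_lt_card hss
          obtain ⟨Ba, hBa⟩ := ih a z (by omega) (NReach.trans T hqy h1) hzq'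
          exact ⟨Ba, fun _ => hBa⟩
        · by_cases hc2 : NReach T y a ∧ ¬(NReach T y a ∧ NReach T a y)
          · have haz : ¬ NReach T a z := fun h3 => hcond ⟨hc2.1, hc2.2, h3⟩
            refine ⟨0, fun _ u => ?_⟩
            by_contra hc
            push_neg at hc
            exact haz ⟨u, hc⟩
          · exact ⟨0, fun hcon => absurd hcon hc2⟩
      choose fB hfB using hIH
      set B' := Finset.univ.sup fB with hB'
      set KK := Finset.univ.sup
        (fun c : A => Finset.univ.sup (fun bp : T.Q × T.Q => T.μ c bp.1 bp.2)) with hKK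
      set n := Fintype.card T.Q with hn
      obtain ⟨CC, hCC⟩ := cuts_bounded T hh hb hqy hzq'
      refine ⟨CC * (n * (n * (KK * B'))), fun w => ?_⟩
      have hdec := decomp T z (fun x => NReach T y x ∧ NReach T x y) hzC w y
        ⟨NReach.refl T y, NReach.refl T y⟩
      refine le_trans hdec (le_trans (Finset.sum_le_sum
        (g := fun i => if (∃ b a : T.Q, ((NReach T y b ∧ NReach T b y) ∧
          ¬(NReach T y a ∧ NReach T a y)) ∧
          1 ≤ T.μW (w.take i) y b ∧ 1 ≤ T.μW ((w.take (i+1)).drop i) b a ∧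
          1 ≤ T.μW (w.drop (i+1)) a z) then n * (n * (KK * B')) else 0) ?_) ?_)
      · -- pointwise bound for each cut position i
        intro i hi
        beta_reduce
        have hiw : i < w.length := Finset.mem_range.1 hi
        by_cases hv : ∃ b a : T.Q, ((NReach T y b ∧ NReach T b y) ∧
            ¬(NReach T y a ∧ NReach T a y)) ∧
            1 ≤ T.μW (w.take i) y b ∧ 1 ≤ T.μW ((w.take (i+1)).drop i) b a ∧
            1 ≤ T.μW (w.drop (i+1)) a z
        · rw [if_pos hv]
          refine le_trans (Finset.sum_le_card_nsmul _ _ (n * (KK * B'))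
            (fun b _ => ?_)) (le_of_eq (by rw [smul_eq_mul, Finset.card_univ]))
          refine le_trans (Finset.sum_le_card_nsmul _ _ (KK * B')
            (fun a _ => ?_)) (le_of_eq (by rw [smul_eq_mul, Finset.card_univ]))
          split_ifs with hcond
          · by_cases hP : T.μW (w.take i) y b = 0
            · simp [hP]
            by_cases hL : T.μW ((w.take (i+1)).drop i) b a = 0
            · simp [hL]
            by_cases hR : T.μW (w.drop (i+1)) a z = 0
            · simp [hR]
            have hP1 : T.μW (w.take i) y b ≤ 1 := scc_bound T hh hcond.1.2 _
            have hL1 : T.μW ((w.take (i+1)).drop i) b a ≤ KK := by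
              rw [seg_singleton w i hiw, NAut.μW_single]
              calc T.μ (w.get ⟨i, hiw⟩) b a
                  ≤ Finset.univ.sup (fun bp : T.Q × T.Q =>
                      T.μ (w.get ⟨i, hiw⟩) bp.1 bp.2) :=
                    Finset.le_sup (f := fun bp : T.Q × T.Q =>
                      T.μ (w.get ⟨i, hiw⟩) bp.1 bp.2) (Finset.mem_univ (b, a))
              _ ≤ KK := Finset.le_sup (f := fun c : A => Finset.univ.sup
                    (fun bp : T.Q × T.Q => T.μ c bp.1 bp.2)) (Finset.mem_univ _)
            have hR1 : T.μW (w.drop (i+1)) a z ≤ B' := by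
              have hyb : NReach T y b := ⟨w.take i, Nat.one_le_iff_ne_zero.2 hP⟩
              have hba : NReach T b a :=
                ⟨(w.take (i+1)).drop i, Nat.one_le_iff_ne_zero.2 hL⟩
              have hya : NReach T y a := NReach.trans T hyb hba
              refine le_trans (hfB a ⟨hya, hcond.2⟩ _) ?_
              exact Finset.le_sup (Finset.mem_univ a)
            calc T.μW (w.take i) y b * T.μW ((w.take (i+1)).drop i) b a *
                  T.μW (w.drop (i+1)) a z
                ≤ 1 * KK * B' := Nat.mul_le_mul (Nat.mul_le_mul hP1 hL1) hR1
            _ = KK * B' := by ring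
          · exact Nat.zero_le _
        · rw [if_neg hv]
          apply Nat.le_of_eq
          apply Finset.sum_eq_zero
          intro b _
          apply Finset.sum_eq_zero
          intro a _
          split_ifs with hcond
          · by_contra hne
            have h1 : T.μW (w.take i) y b ≠ 0 := by
              intro h0
              exact hne (by simp [h0])
            have h2 : T.μW ((w.take (i+1)).drop i) b a ≠ 0 := by
              intro h0
              exact hne (by simp [h0])
            have h3 : T.μW (w.drop (i+1)) a z ≠ 0 := by
              intro h0
              exact hne (by simp [h0])
            exact hv ⟨b, a, hcond, Nat.one_le_iff_ne_zero.2 h1,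
              Nat.one_le_iff_ne_zero.2 h2, Nat.one_le_iff_ne_zero.2 h3⟩
          · rfl
      · -- the number of valid cuts is bounded by CC
        rw [← Finset.sum_filter]
        rw [Finset.sum_const, smul_eq_mul]
        have hcards := hCC w ((Finset.range w.length).filter (fun i => ∃ b a : T.Q,
          ((NReach T y b ∧ NReach T b y) ∧ ¬(NReach T y a ∧ NReach T a y)) ∧
          1 ≤ T.μW (w.take i) y b ∧ 1 ≤ T.μW ((w.take (i+1)).drop i) b a ∧
          1 ≤ T.μW (w.drop (i+1)) a z))
          (by
            intro i hi
            have hi' := Finset.mem_filter.1 hi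
            exact ⟨Finset.mem_range.1 hi'.1, hi'.2⟩)
        exact Nat.mul_le_mul hcards le_rfl

end Stmt13Aux

theorem stmt13 {A : Type} [Fintype A] (T : NAut A) (hT : T.Trim)
    (h : ¬ ∃ q v, T.HeavyCycle q v) :
    ∃ Bd : ℕ, ∀ (i : ℕ) (q q' : T.Q) (w : List A),
      HeightIs T.GEdge q i → HeightIs T.GEdge q' i → T.μW w q q' ≤ Bd := by
  classical
  have hh : ∀ q v, ¬ T.HeavyCycle q v := fun q v hc => h ⟨q, v, hc⟩
  have key : ∀ qq : T.Q × T.Q, ∃ B : ℕ,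
      (∃ i, HeightIs T.GEdge qq.1 i ∧ HeightIs T.GEdge qq.2 i) →
      ∀ w, T.μW w qq.1 qq.2 ≤ B := by
    rintro ⟨q, q'⟩
    by_cases hcond : ∃ i, HeightIs T.GEdge q i ∧ HeightIs T.GEdge q' i
    · obtain ⟨i, hq, hq'⟩ := hcond
      have hb : ∀ α β v, T.Barbell α β v → NReach T q α → NReach T β q' → False := by
        rintro α β v hbarb ⟨wa, hwa⟩ ⟨wb, hwb⟩
        have hedge : T.GEdge q q' := ⟨α, β, v, hbarb, ⟨wa, hwa⟩, ⟨wb, hwb⟩⟩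
        have hpath : PathLen T.GEdge q' (i+1) := PathLen.succ hq.1 hedge
        have := hq'.2 (i+1) hpath
        omega
      obtain ⟨B, hB⟩ := main_bound T hh hb (Fintype.card T.Q) q q'
        (le_trans (Finset.card_filter_le _ _) (le_of_eq Finset.card_univ))
        (NReach.refl T q) (NReach.refl T q')
      exact ⟨B, fun _ => hB⟩
    · exact ⟨0, fun hc => absurd hc hcond⟩
  choose fBd hfBd using key
  refine ⟨Finset.univ.sup fBd, ?_⟩
  intro i q q' w hq hq'
  exact le_trans (hfBd (q, q') ⟨i, hq, hq'⟩ w)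
    (Finset.le_sup (Finset.mem_univ (q, q')))
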